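/- Let G be a connected 3-uniform hypergraph on {1,…,n} with at least one edge. Then G is tripartite if and only if the Laplacian tensor D−A has an eigenvector associated with the eigenvalue zero that is not a constant vector, i.e., there exists a nonzero x ∈ ℂ^n with ((D−A) x²)_i = 0 for all i and x_a ≠ x_b for some a, b. -/

import Mathlib

open Finset

/-- Degree of vertex `i` in the hypergraph with edge set `E`. -/
def hdeg {n : ℕ} (E : Finset (Finset (Fin n))) (i : Fin n) : ℕ :=
  (E.filter fun e => i ∈ e).card

/-- Laplacian tensor action `((D - A) x^{k-1})_i` over ℂ. -/
noncomputable def lapC (k : ℕ) {n : ℕ} (E : Finset (Finset (Fin n)))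
    (x : Fin n → ℂ) (i : Fin n) : ℂ :=
  (hdeg E i : ℂ) * x i ^ (k - 1) -
    ∑ e ∈ E.filter (fun e => i ∈ e), ∏ j ∈ e.erase i, x j

/-- Signless Laplacian tensor action `((D + A) x^{k-1})_i` over ℂ. -/
noncomputable def slapC (k : ℕ) {n : ℕ} (E : Finset (Finset (Fin n)))
    (x : Fin n → ℂ) (i : Fin n) : ℂ :=
  (hdeg E i : ℂ) * x i ^ (k - 1) +
    ∑ e ∈ E.filter (fun e => i ∈ e), ∏ j ∈ e.erase i, x j

/-- Laplacian tensor action `((D - A) x^{k-1})_i` over ℝ. -/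
noncomputable def lapR (k : ℕ) {n : ℕ} (E : Finset (Finset (Fin n)))
    (x : Fin n → ℝ) (i : Fin n) : ℝ :=
  (hdeg E i : ℝ) * x i ^ (k - 1) -
    ∑ e ∈ E.filter (fun e => i ∈ e), ∏ j ∈ e.erase i, x j

/-- Signless Laplacian tensor action `((D + A) x^{k-1})_i` over ℝ. -/
noncomputable def slapR (k : ℕ) {n : ℕ} (E : Finset (Finset (Fin n)))
    (x : Fin n → ℝ) (i : Fin n) : ℝ :=
  (hdeg E i : ℝ) * x i ^ (k - 1) +
    ∑ e ∈ E.filter (fun e => i ∈ e), ∏ j ∈ e.erase i, x j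

/-- The hypergraph with edge set `E` is connected: every pair of distinct vertices is
joined by a chain of edges with consecutive edges intersecting. -/
def HConnected {n : ℕ} (E : Finset (Finset (Fin n))) : Prop :=
  ∀ i j : Fin n, i ≠ j → ∃ m : ℕ, ∃ es : Fin (m + 1) → Finset (Fin n),
    (∀ r, es r ∈ E) ∧ i ∈ es 0 ∧ j ∈ es (Fin.last m) ∧
    ∀ r : Fin m, (es r.castSucc ∩ es r.succ).Nonempty

/-- If a sum of complex numbers equals `card * w` and each term has modulus at most `|w|`,
then every term equals `w`. -/
lemma sum_terms_eq {α : Type*} {s : Finset α} {f : α → ℂ} {w : ℂ}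
    (hsum : ∑ a ∈ s, f a = (s.card : ℂ) * w)
    (hb : ∀ a ∈ s, ‖f a‖ ≤ ‖w‖) :
    ∀ a ∈ s, f a = w := by
  rcases eq_or_ne w 0 with hw | hw
  · intro a ha
    have := hb a ha
    rw [hw] at this ⊢
    exact norm_eq_zero.mp (le_antisymm (by simpa only [norm_zero] using this) (norm_nonneg _))
  · set W := ‖w‖ with hW
    have hWpos : 0 < W := norm_pos_iff.mpr hw
    have key : ∀ a ∈ s, ((starRingEnd ℂ) w * f a).re = W ^ 2 := by
      have hsum2 : ∑ a ∈ s, (W ^ 2 - ((starRingEnd ℂ) w * f a).re) = 0 := by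
        have : ∑ a ∈ s, ((starRingEnd ℂ) w * f a).re = (s.card : ℝ) * W ^ 2 := by
          have h1 : ∑ a ∈ s, ((starRingEnd ℂ) w * f a) = (s.card : ℂ) * ((starRingEnd ℂ) w * w) := by
            rw [← Finset.mul_sum, hsum]; ring
          have h2 := congrArg Complex.re h1
          rw [Complex.re_sum] at h2
          rw [h2]
          have : (starRingEnd ℂ) w * w = (Complex.normSq w : ℂ) := by
            rw [mul_comm, Complex.mul_conj]
          rw [this, ← Complex.sq_norm]
          simp [← hW, ← Complex.ofReal_pow]
        rw [Finset.sum_sub_distrib, this, Finset.sum_const]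
        ring
      intro a ha
      have hnn : ∀ a ∈ s, 0 ≤ W ^ 2 - ((starRingEnd ℂ) w * f a).re := by
        intro a ha
        have h1 : ((starRingEnd ℂ) w * f a).re ≤ ‖(starRingEnd ℂ) w * f a‖ :=
          Complex.re_le_norm _
        have h2 : ‖(starRingEnd ℂ) w * f a‖ = W * ‖f a‖ := by
          rw [norm_mul, Complex.norm_conj]
        have h3 : W * ‖f a‖ ≤ W * W :=
          mul_le_mul_of_nonneg_left (hb a ha) (le_of_lt hWpos)
        nlinarith
      have := (Finset.sum_eq_zero_iff_of_nonneg hnn).mp hsum2 a ha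
      linarith
    intro a ha
    set u := (starRingEnd ℂ) w * f a with hu
    have hre : u.re = W ^ 2 := key a ha
    have habs : ‖u‖ ≤ W ^ 2 := by
      rw [hu, norm_mul, Complex.norm_conj]
      have := hb a ha
      nlinarith [norm_nonneg (f a)]
    have habs' : ‖u‖ = u.re := le_antisymm (by rw [hre]; exact habs) (Complex.re_le_norm u)
    have him : u.im = 0 := by
      have h1 : (‖u‖) ^ 2 = u.re ^ 2 + u.im ^ 2 := by
        rw [Complex.sq_norm, Complex.normSq_apply]; ring
      nlinarith
    have hueq : u = (W ^ 2 : ℂ) := by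
      apply Complex.ext
      · simp [hre, ← Complex.ofReal_pow]
      · simp [him, ← Complex.ofReal_pow]
    have hcw : (starRingEnd ℂ) w * w = (W ^ 2 : ℂ) := by
      rw [mul_comm, Complex.mul_conj, ← Complex.sq_norm]
      push_cast
      ring
    have : (starRingEnd ℂ) w * f a = (starRingEnd ℂ) w * w := by rw [← hu, hueq, hcw]
    exact mul_left_cancel₀ (by simpa using hw) this

/-- Key local lemma: at a vertex of maximal modulus, all incident edges have all
vertices of maximal modulus, and the product over the rest of each edge is `x i ^ 2`. -/
lemma max_local {n : ℕ} {E : Finset (Finset (Fin n))} (hE : ∀ e ∈ E, e.card = 3)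
    {x : Fin n → ℂ} (hx : ∀ i, lapC 3 E x i = 0) {M : ℝ}
    (hM : ∀ j, ‖x j‖ ≤ M) {i : Fin n} (hi : ‖x i‖ = M)
    (hMpos : 0 < M) {e : Finset (Fin n)} (he : e ∈ E) (hie : i ∈ e) :
    (∀ j ∈ e, ‖x j‖ = M) ∧ (∏ j ∈ e.erase i, x j = x i ^ 2) := by
  have heq : ∑ e' ∈ E.filter (fun e' => i ∈ e'), ∏ j ∈ e'.erase i, x j
      = ((E.filter (fun e' => i ∈ e')).card : ℂ) * (x i ^ 2) := by
    have := hx i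
    unfold lapC at this
    unfold hdeg at this
    rw [sub_eq_zero] at this
    rw [← this]
  have hbound : ∀ e' ∈ E.filter (fun e' => i ∈ e'),
      ‖∏ j ∈ e'.erase i, x j‖ ≤ ‖x i ^ 2‖ := by
    intro e' he'
    rw [Finset.mem_filter] at he'
    have hcard : (e'.erase i).card = 2 := by
      rw [Finset.card_erase_of_mem he'.2, hE e' he'.1]
    rw [norm_prod, norm_pow, hi]
    calc ∏ j ∈ e'.erase i, ‖x j‖ ≤ ∏ _j ∈ e'.erase i, M :=
          Finset.prod_le_prod (fun j _ => norm_nonneg _) (fun j _ => hM j)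
      _ = M ^ 2 := by rw [Finset.prod_const, hcard]
  have hall := sum_terms_eq heq hbound
  have hmem : e ∈ E.filter (fun e' => i ∈ e') := Finset.mem_filter.mpr ⟨he, hie⟩
  have hprod : ∏ j ∈ e.erase i, x j = x i ^ 2 := hall e hmem
  refine ⟨?_, hprod⟩
  intro j hj
  rcases eq_or_ne j i with rfl | hji
  · exact hi
  · have hje : j ∈ e.erase i := Finset.mem_erase.mpr ⟨hji, hj⟩
    have habsprod : ∏ k ∈ e.erase i, ‖x k‖ = M ^ 2 := by
      rw [← norm_prod, hprod, norm_pow, hi]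
    have hsplit : ‖x j‖ * ∏ k ∈ (e.erase i).erase j, ‖x k‖ = M ^ 2 := by
      rw [Finset.mul_prod_erase (e.erase i) (fun k => ‖x k‖) hje, habsprod]
    have hcard : ((e.erase i).erase j).card = 1 := by
      rw [Finset.card_erase_of_mem hje, Finset.card_erase_of_mem hie, hE e he]
    have hrest : ∏ k ∈ (e.erase i).erase j, ‖x k‖ ≤ M := by
      calc ∏ k ∈ (e.erase i).erase j, ‖x k‖ ≤ ∏ _k ∈ (e.erase i).erase j, M :=
            Finset.prod_le_prod (fun k _ => norm_nonneg _) (fun k _ => hM k)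
        _ = M := by rw [Finset.prod_const, hcard, pow_one]
    have hrestnn : 0 ≤ ∏ k ∈ (e.erase i).erase j, ‖x k‖ :=
      Finset.prod_nonneg (fun k _ => norm_nonneg _)
    have h1 : ‖x j‖ ≤ M := hM j
    nlinarith [norm_nonneg (x j)]

/-- Propagation of a property along a chain of edges. -/
lemma chain_reach {n : ℕ} {E : Finset (Finset (Fin n))} {P : Fin n → Prop}
    (hstep : ∀ e ∈ E, ∀ i ∈ e, P i → ∀ j ∈ e, P j)
    {m : ℕ} {es : Fin (m + 1) → Finset (Fin n)} (hes : ∀ r, es r ∈ E)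
    (hint : ∀ r : Fin m, (es r.castSucc ∩ es r.succ).Nonempty)
    {i : Fin n} (hi : i ∈ es 0) (hP : P i) : ∀ j ∈ es (Fin.last m), P j := by
  have key : ∀ r : ℕ, ∀ hr : r < m + 1, ∀ j ∈ es ⟨r, hr⟩, P j := by
    intro r
    induction r with
    | zero => intro hr j hj; exact hstep (es 0) (hes 0) i hi hP j hj
    | succ r ih =>
      intro hr j hj
      have hrm : r < m := by omega
      have hr' : r < m + 1 := by omega
      obtain ⟨v, hv⟩ := hint ⟨r, hrm⟩
      rw [Finset.mem_inter] at hv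
      have hv1 : v ∈ es ⟨r, hr'⟩ := by
        have : (⟨r, hrm⟩ : Fin m).castSucc = ⟨r, hr'⟩ := rfl
        rw [← this]; exact hv.1
      have hv2 : v ∈ es ⟨r + 1, hr⟩ := by
        have : (⟨r, hrm⟩ : Fin m).succ = ⟨r + 1, hr⟩ := rfl
        rw [← this]; exact hv.2
      exact hstep _ (hes _) v hv2 (ih hr' v hv1) j hj
  intro j hj
  exact key m (by omega) j hj

lemma omega_sum {ω : ℂ} (hω3 : ω ^ 3 = 1) (hω1 : ω ≠ 1) : ω ^ 2 + ω + 1 = 0 := by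
  have h : (ω - 1) * (ω ^ 2 + ω + 1) = 0 := by linear_combination hω3
  rcases mul_eq_zero.mp h with h' | h'
  · exact absurd (sub_eq_zero.mp h') hω1
  · exact h'

lemma cube_roots {ω z s : ℂ} (hω3 : ω ^ 3 = 1) (hsum : ω ^ 2 + ω + 1 = 0)
    (hz : z ^ 3 = s ^ 3) : z = s ∨ z = s * ω ∨ z = s * ω ^ 2 := by
  have h : (z - s) * (z - s * ω) * (z - s * ω ^ 2) = 0 := by
    linear_combination hz + (s ^ 2 * z - s ^ 3) * hω3 + (-(s * z ^ 2) + s ^ 2 * z) * hsum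
  rcases mul_eq_zero.mp h with h' | h'
  · rcases mul_eq_zero.mp h' with h'' | h''
    · exact Or.inl (sub_eq_zero.mp h'')
    · exact Or.inr (Or.inl (sub_eq_zero.mp h''))
  · exact Or.inr (Or.inr (sub_eq_zero.mp h'))

lemma tri {s ω u v w : ℂ} (hs : s ≠ 0) (hω3 : ω ^ 3 = 1)
    (hu : u = s ∨ u = s * ω ∨ u = s * ω ^ 2)
    (hv : v = s ∨ v = s * ω ∨ v = s * ω ^ 2)
    (hw : w = s ∨ w = s * ω ∨ w = s * ω ^ 2)
    (hprod : u * v * w = s ^ 3) :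
    (u = v ∧ v = w) ∨
      ((u = s ∨ v = s ∨ w = s) ∧ (u = s * ω ∨ v = s * ω ∨ w = s * ω) ∧
        (u = s * ω ^ 2 ∨ v = s * ω ^ 2 ∨ w = s * ω ^ 2)) := by
  have hcube : ∀ z : ℂ, (z = s ∨ z = s * ω ∨ z = s * ω ^ 2) → z ^ 3 = s ^ 3 := by
    rintro z (rfl | rfl | rfl)
    · ring
    · linear_combination s ^ 3 * hω3
    · linear_combination (s ^ 3 * ω ^ 3 + s ^ 3) * hω3
  have hnz : ∀ z : ℂ, (z = s ∨ z = s * ω ∨ z = s * ω ^ 2) → z ≠ 0 := by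
    intro z hz h0
    apply hs
    have h3 := hcube z hz
    rw [h0] at h3
    exact pow_eq_zero_iff (n := 3) (by norm_num) |>.mp (by simpa using h3.symm)
  have hu3 := hcube u hu
  have hv3 := hcube v hv
  have hu0 := hnz u hu
  have hv0 := hnz v hv
  rcases eq_or_ne u v with rfl | huv
  · have hw' : w = u := by
      apply mul_left_cancel₀ (mul_ne_zero hu0 hu0)
      linear_combination hprod - hu3
    exact Or.inl ⟨rfl, hw'.symm⟩
  rcases eq_or_ne v w with rfl | hvw
  · have hu' : u = v := by
      apply mul_right_cancel₀ (mul_ne_zero hv0 hv0)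
      linear_combination hprod - hv3
    exact Or.inl ⟨hu', rfl⟩
  rcases eq_or_ne u w with rfl | huw
  · have hv' : v = u := by
      apply mul_right_cancel₀ (mul_ne_zero hu0 hu0)
      linear_combination hprod - hu3
    exact absurd hv'.symm huv
  rcases hu with rfl | rfl | rfl <;> rcases hv with rfl | rfl | rfl <;>
      rcases hw with rfl | rfl | rfl <;>
    first
      | exact absurd rfl huv
      | exact absurd rfl hvw
      | exact absurd rfl huw
      | refine Or.inr ⟨?_, ?_, ?_⟩ <;>
          first
            | exact Or.inl rfl
            | exact Or.inr (Or.inl rfl)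
            | exact Or.inr (Or.inr rfl)

theorem stmt_18 {n : ℕ} (hn : 3 ≤ n)
    (E : Finset (Finset (Fin n))) (hE : ∀ e ∈ E, e.card = 3)
    (hconn : HConnected E) (hne : E.Nonempty) :
    (∃ V1 V2 V3 : Finset (Fin n), V1.Nonempty ∧ V2.Nonempty ∧ V3.Nonempty ∧
        Disjoint V1 V2 ∧ Disjoint V1 V3 ∧ Disjoint V2 V3 ∧
        V1 ∪ V2 ∪ V3 = Finset.univ ∧
        ∀ e ∈ E, (e ⊆ V1 ∨ e ⊆ V2 ∨ e ⊆ V3) ∨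
          ((e ∩ V1).Nonempty ∧ (e ∩ V2).Nonempty ∧ (e ∩ V3).Nonempty)) ↔
      ∃ x : Fin n → ℂ, x ≠ 0 ∧ (∀ i, lapC 3 E x i = 0) ∧
        ∃ a b : Fin n, x a ≠ x b := by
  have hprim : IsPrimitiveRoot (Complex.exp (2 * Real.pi * Complex.I / 3)) 3 :=
    Complex.isPrimitiveRoot_exp 3 (by norm_num)
  set ω : ℂ := Complex.exp (2 * Real.pi * Complex.I / 3) with hωdef
  have hω3 : ω ^ 3 = 1 := hprim.pow_eq_one
  have hω1 : ω ≠ 1 := hprim.ne_one (by norm_num)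
  have hω0 : ω ≠ 0 := by
    intro h
    rw [h] at hω3
    simp at hω3
  have hω21 : ω ^ 2 ≠ 1 := by
    intro h
    exact hω1 (by linear_combination hω3 - ω * h)
  have hsum : ω ^ 2 + ω + 1 = 0 := omega_sum hω3 hω1
  constructor
  · -- tripartite → eigenvector
    rintro ⟨V1, V2, V3, h1, h2, h3, d12, d13, d23, huniv, hedge⟩
    set x : Fin n → ℂ := fun i => if i ∈ V1 then 1 else if i ∈ V2 then ω else ω ^ 2 with hxdef
    have hxV1 : ∀ i ∈ V1, x i = 1 := by intro i hi; simp [hxdef, hi]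
    have hxV2 : ∀ i ∈ V2, x i = ω := by
      intro i hi
      have : i ∉ V1 := Finset.disjoint_right.mp d12 hi
      simp [hxdef, this, hi]
    have hxV3 : ∀ i ∈ V3, x i = ω ^ 2 := by
      intro i hi
      have h1' : i ∉ V1 := Finset.disjoint_right.mp d13 hi
      have h2' : i ∉ V2 := Finset.disjoint_right.mp d23 hi
      simp [hxdef, h1', h2']
    have hval : ∀ i, x i = 1 ∨ x i = ω ∨ x i = ω ^ 2 := by
      intro i
      by_cases hi1 : i ∈ V1
      · exact Or.inl (hxV1 i hi1)
      · by_cases hi2 : i ∈ V2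
        · exact Or.inr (Or.inl (hxV2 i hi2))
        · simp [hxdef, hi1, hi2]
    have hx3 : ∀ i, x i ^ 3 = 1 := by
      intro i
      rcases hval i with h | h | h <;> rw [h]
      · ring
      · exact hω3
      · linear_combination (ω ^ 3 + 1) * hω3
    have hx0 : ∀ i, x i ≠ 0 := by
      intro i h
      have := hx3 i
      rw [h] at this
      simp at this
    have hprodE : ∀ e ∈ E, ∏ j ∈ e, x j = 1 := by
      intro e he
      obtain ⟨p1, p2, p3, h12, h13, h23, heq⟩ := Finset.card_eq_three.mp (hE e he)
      have hmem1 : p1 ∈ e := by rw [heq]; simp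
      have hmem2 : p2 ∈ e := by rw [heq]; simp
      have hmem3 : p3 ∈ e := by rw [heq]; simp
      have hprod : ∏ j ∈ e, x j = x p1 * (x p2 * x p3) := by
        rw [heq, Finset.prod_insert (by simp [h12, h13]), Finset.prod_insert (by simp [h23]),
          Finset.prod_singleton]
      rcases hedge e he with (hsub | hsub | hsub) | ⟨⟨z1, hz1⟩, ⟨z2, hz2⟩, ⟨z3, hz3⟩⟩
      · rw [hprod, hxV1 p1 (hsub hmem1), hxV1 p2 (hsub hmem2), hxV1 p3 (hsub hmem3)]; ring
      · rw [hprod, hxV2 p1 (hsub hmem1), hxV2 p2 (hsub hmem2), hxV2 p3 (hsub hmem3)]; linear_combination hω3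
      · rw [hprod, hxV3 p1 (hsub hmem1), hxV3 p2 (hsub hmem2), hxV3 p3 (hsub hmem3)]
        linear_combination (ω ^ 3 + 1) * hω3
      · rw [Finset.mem_inter] at hz1 hz2 hz3
        have hv1 := hxV1 z1 hz1.2
        have hv2 := hxV2 z2 hz2.2
        have hv3 := hxV3 z3 hz3.2
        have hne12 : z1 ≠ z2 := by
          intro h; rw [h, hv2] at hv1; exact hω1 hv1
        have hne13 : z1 ≠ z3 := by
          intro h; rw [h, hv3] at hv1; exact hω21 hv1
        have hne23 : z2 ≠ z3 := by
          intro h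
          rw [h, hv3] at hv2
          exact hω1 (mul_left_cancel₀ hω0
            (show ω * ω = ω * 1 by rw [mul_one]; linear_combination hv2))
        have hsubset : ({z1, z2, z3} : Finset (Fin n)) ⊆ e := by
          intro z hz
          simp only [Finset.mem_insert, Finset.mem_singleton] at hz
          rcases hz with rfl | rfl | rfl
          · exact hz1.1
          · exact hz2.1
          · exact hz3.1
        have hcard : ({z1, z2, z3} : Finset (Fin n)).card = 3 := by
          rw [Finset.card_insert_of_notMem (by simp [hne12, hne13]),
            Finset.card_insert_of_notMem (by simp [hne23]), Finset.card_singleton]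
        have heeq : e = {z1, z2, z3} :=
          (Finset.eq_of_subset_of_card_le hsubset (by rw [hE e he, hcard])).symm
        rw [heeq, Finset.prod_insert (by simp [hne12, hne13]),
          Finset.prod_insert (by simp [hne23]), Finset.prod_singleton, hv1, hv2, hv3]
        linear_combination hω3
    refine ⟨x, ?_, ?_, ?_⟩
    · intro h0
      obtain ⟨a, ha⟩ := h1
      have := congrFun h0 a
      rw [hxV1 a ha] at this
      simp at this
    · intro i
      unfold lapC hdeg
      rw [sub_eq_zero]
      have hterm : ∀ e ∈ E.filter (fun e => i ∈ e), ∏ j ∈ e.erase i, x j = x i ^ 2 := by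
        intro e he'
        rw [Finset.mem_filter] at he'
        apply mul_left_cancel₀ (hx0 i)
        rw [Finset.mul_prod_erase e x he'.2, hprodE e he'.1]
        rw [← hx3 i]; ring
      rw [Finset.sum_congr rfl hterm, Finset.sum_const, nsmul_eq_mul]
    · obtain ⟨a, ha⟩ := h1
      obtain ⟨b, hb⟩ := h2
      refine ⟨a, b, ?_⟩
      rw [hxV1 a ha, hxV2 b hb]
      exact fun h => hω1 h.symm
  · -- eigenvector → tripartite
    rintro ⟨x, hx0, heig, a, b, hab⟩
    haveI : Nonempty (Fin n) := ⟨⟨0, by omega⟩⟩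
    obtain ⟨i₀, -, hmax⟩ := Finset.univ.exists_max_image (fun j => ‖x j‖)
      Finset.univ_nonempty
    set M : ℝ := ‖x i₀‖ with hMdef
    have hM : ∀ j, ‖x j‖ ≤ M := fun j => hmax j (Finset.mem_univ j)
    have hMpos : 0 < M := by
      obtain ⟨k, hk⟩ := Function.ne_iff.mp hx0
      have hk' : x k ≠ 0 := by simpa using hk
      exact lt_of_lt_of_le (norm_pos_iff.mpr hk') (hM k)
    have hstep1 : ∀ e ∈ E, ∀ i ∈ e, ‖x i‖ = M → ∀ j ∈ e, ‖x j‖ = M :=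
      fun e he i hie hiM j hj => (max_local hE heig hM hiM hMpos he hie).1 j hj
    have hallM : ∀ j, ‖x j‖ = M := by
      intro j
      rcases eq_or_ne j i₀ with rfl | hne
      · rfl
      · obtain ⟨m, es, hesE, hi0, hjlast, hint⟩ := hconn i₀ j (Ne.symm hne)
        exact chain_reach hstep1 hesE hint hi0 rfl j hjlast
    have hxnz : ∀ v, x v ≠ 0 := by
      intro v h
      have := hallM v
      rw [h] at this
      simp at this
      rw [← this] at hMpos
      exact lt_irrefl 0 hMpos
    have hprode : ∀ e ∈ E, ∀ i ∈ e, ∏ j ∈ e.erase i, x j = x i ^ 2 :=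
      fun e he i hie => (max_local hE heig hM (hallM i) hMpos he hie).2
    have hcubee : ∀ e ∈ E, ∀ i ∈ e, x i ^ 3 = ∏ j ∈ e, x j := by
      intro e he i hie
      rw [← Finset.mul_prod_erase e x hie, hprode e he i hie]
      ring
    set s : ℂ := x a with hsdef
    have hs : s ≠ 0 := hxnz a
    have hcuball : ∀ v, x v ^ 3 = s ^ 3 := by
      intro v
      rcases eq_or_ne v a with rfl | hne
      · rfl
      · obtain ⟨m, es, hesE, hi0, hjlast, hint⟩ := hconn a v (Ne.symm hne)
        have hstep2 : ∀ e ∈ E, ∀ i ∈ e, x i ^ 3 = s ^ 3 → ∀ j ∈ e, x j ^ 3 = s ^ 3 :=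
          fun e he i hie hP j hj => ((hcubee e he j hj).trans (hcubee e he i hie).symm).trans hP
        exact chain_reach hstep2 hesE hint hi0 rfl v hjlast
    have hclass : ∀ v, x v = s ∨ x v = s * ω ∨ x v = s * ω ^ 2 :=
      fun v => cube_roots hω3 hsum (hcuball v)
    have hprod3 : ∀ e ∈ E, ∀ p1 p2 p3 : Fin n, p1 ≠ p2 → p1 ≠ p3 → p2 ≠ p3 →
        e = {p1, p2, p3} → x p1 * x p2 * x p3 = s ^ 3 := by
      intro e he p1 p2 p3 h12 h13 h23 heq
      have hmem1 : p1 ∈ e := by rw [heq]; simp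
      have : ∏ j ∈ e, x j = x p1 * (x p2 * x p3) := by
        rw [heq, Finset.prod_insert (by simp [h12, h13]), Finset.prod_insert (by simp [h23]),
          Finset.prod_singleton]
      rw [mul_assoc, ← this, ← hcubee e he p1 hmem1, hcuball p1]
    -- find a rainbow edge
    have hrb : ∃ e ∈ E, ∃ p ∈ e, ∃ q ∈ e, x p ≠ x q := by
      by_contra hmono
      push_neg at hmono
      have hstep3 : ∀ e ∈ E, ∀ i ∈ e, x i = s → ∀ j ∈ e, x j = s :=
        fun e he i hie hi j hj => (hmono e he j hj i hie).trans hi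
      have hne : a ≠ b := fun h => hab (h ▸ rfl)
      obtain ⟨m, es, hesE, hi0, hjlast, hint⟩ := hconn a b hne
      have : x b = s := chain_reach hstep3 hesE hint hi0 rfl b hjlast
      exact hab this.symm
    obtain ⟨e₀, he₀, p, hp, q, hq, hpq⟩ := hrb
    obtain ⟨p1, p2, p3, h12, h13, h23, he₀eq⟩ := Finset.card_eq_three.mp (hE e₀ he₀)
    have htri := tri hs hω3 (hclass p1) (hclass p2) (hclass p3)
      (hprod3 e₀ he₀ p1 p2 p3 h12 h13 h23 he₀eq)
    have hrainbow : (x p1 = s ∨ x p2 = s ∨ x p3 = s) ∧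
        (x p1 = s * ω ∨ x p2 = s * ω ∨ x p3 = s * ω) ∧
        (x p1 = s * ω ^ 2 ∨ x p2 = s * ω ^ 2 ∨ x p3 = s * ω ^ 2) := by
      rcases htri with ⟨hA, hB⟩ | h
      · exfalso
        have hconst : ∀ z ∈ e₀, x z = x p1 := by
          intro z hz
          rw [he₀eq] at hz
          simp only [Finset.mem_insert, Finset.mem_singleton] at hz
          rcases hz with rfl | rfl | rfl
          · rfl
          · exact hA.symm
          · exact (hA.trans hB).symm
        exact hpq ((hconst p hp).trans (hconst q hq).symm)
      · exact h
    refine ⟨Finset.univ.filter (fun i => x i = s), Finset.univ.filter (fun i => x i = s * ω),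
      Finset.univ.filter (fun i => x i = s * ω ^ 2), ?_, ?_, ?_, ?_, ?_, ?_, ?_, ?_⟩
    · exact ⟨a, Finset.mem_filter.mpr ⟨Finset.mem_univ a, rfl⟩⟩
    · rcases hrainbow.2.1 with h | h | h
      exacts [⟨p1, Finset.mem_filter.mpr ⟨Finset.mem_univ _, h⟩⟩,
        ⟨p2, Finset.mem_filter.mpr ⟨Finset.mem_univ _, h⟩⟩,
        ⟨p3, Finset.mem_filter.mpr ⟨Finset.mem_univ _, h⟩⟩]
    · rcases hrainbow.2.2 with h | h | h
      exacts [⟨p1, Finset.mem_filter.mpr ⟨Finset.mem_univ _, h⟩⟩,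
        ⟨p2, Finset.mem_filter.mpr ⟨Finset.mem_univ _, h⟩⟩,
        ⟨p3, Finset.mem_filter.mpr ⟨Finset.mem_univ _, h⟩⟩]
    · rw [Finset.disjoint_left]
      intro i hi1 hi2
      rw [Finset.mem_filter] at hi1 hi2
      have h := hi1.2.symm.trans hi2.2
      exact hω1 (mul_left_cancel₀ hs (show s * ω = s * 1 by rw [mul_one]; exact h.symm))
    · rw [Finset.disjoint_left]
      intro i hi1 hi2
      rw [Finset.mem_filter] at hi1 hi2
      have h := hi1.2.symm.trans hi2.2
      exact hω21 (mul_left_cancel₀ hs (show s * ω ^ 2 = s * 1 by rw [mul_one]; exact h.symm))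
    · rw [Finset.disjoint_left]
      intro i hi1 hi2
      rw [Finset.mem_filter] at hi1 hi2
      have h := hi1.2.symm.trans hi2.2
      have hωeq : ω = ω ^ 2 := mul_left_cancel₀ hs h
      exact hω1 (mul_left_cancel₀ hω0
        (show ω * 1 = ω * ω by rw [mul_one]; linear_combination hωeq)).symm
    · ext i
      simp only [Finset.mem_union, Finset.mem_filter, Finset.mem_univ, true_and, iff_true]
      rcases hclass i with h | h | h
      · exact Or.inl (Or.inl h)
      · exact Or.inl (Or.inr h)
      · exact Or.inr h
    · intro e he
      obtain ⟨q1, q2, q3, k12, k13, k23, heq⟩ := Finset.card_eq_three.mp (hE e he)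
      have hmem : ∀ z ∈ e, z = q1 ∨ z = q2 ∨ z = q3 := by
        intro z hz
        rw [heq] at hz
        simpa using hz
      have hm1 : q1 ∈ e := by rw [heq]; simp
      have hm2 : q2 ∈ e := by rw [heq]; simp
      have hm3 : q3 ∈ e := by rw [heq]; simp
      have htri' := tri hs hω3 (hclass q1) (hclass q2) (hclass q3)
        (hprod3 e he q1 q2 q3 k12 k13 k23 heq)
      rcases htri' with ⟨hA, hB⟩ | ⟨hB1, hB2, hB3⟩
      · left
        have hconst : ∀ z ∈ e, x z = x q1 := by
          intro z hz
          rcases hmem z hz with rfl | rfl | rfl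
          · rfl
          · exact hA.symm
          · exact (hA.trans hB).symm
        rcases hclass q1 with h | h | h
        · exact Or.inl (fun z hz => Finset.mem_filter.mpr
            ⟨Finset.mem_univ z, (hconst z hz).trans h⟩)
        · exact Or.inr (Or.inl (fun z hz => Finset.mem_filter.mpr
            ⟨Finset.mem_univ z, (hconst z hz).trans h⟩))
        · exact Or.inr (Or.inr (fun z hz => Finset.mem_filter.mpr
            ⟨Finset.mem_univ z, (hconst z hz).trans h⟩))
      · right
        refine ⟨?_, ?_, ?_⟩
        · rcases hB1 with h | h | h
          exacts [⟨q1, Finset.mem_inter.mpr ⟨hm1, Finset.mem_filter.mpr ⟨Finset.mem_univ _, h⟩⟩⟩,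
            ⟨q2, Finset.mem_inter.mpr ⟨hm2, Finset.mem_filter.mpr ⟨Finset.mem_univ _, h⟩⟩⟩,
            ⟨q3, Finset.mem_inter.mpr ⟨hm3, Finset.mem_filter.mpr ⟨Finset.mem_univ _, h⟩⟩⟩]
        · rcases hB2 with h | h | h
          exacts [⟨q1, Finset.mem_inter.mpr ⟨hm1, Finset.mem_filter.mpr ⟨Finset.mem_univ _, h⟩⟩⟩,
            ⟨q2, Finset.mem_inter.mpr ⟨hm2, Finset.mem_filter.mpr ⟨Finset.mem_univ _, h⟩⟩⟩,
            ⟨q3, Finset.mem_inter.mpr ⟨hm3, Finset.mem_filter.mpr ⟨Finset.mem_univ _, h⟩⟩⟩]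
        · rcases hB3 with h | h | h
          exacts [⟨q1, Finset.mem_inter.mpr ⟨hm1, Finset.mem_filter.mpr ⟨Finset.mem_univ _, h⟩⟩⟩,
            ⟨q2, Finset.mem_inter.mpr ⟨hm2, Finset.mem_filter.mpr ⟨Finset.mem_univ _, h⟩⟩⟩,
            ⟨q3, Finset.mem_inter.mpr ⟨hm3, Finset.mem_filter.mpr ⟨Finset.mem_univ _, h⟩⟩⟩]
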